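/- arXiv:2504.02646 — 3 statements merged into one kernel-verified Lean document; each statement's English description precedes it below -/
import Mathlib

section
/- Unbiasedness of DSO under homogeneous rewards within neighborhoods: if the similar sentence support condition holds and the gradient-in-neighborhood framework satisfies that for every neighborhood the quantity q^{π_θ}(x,φ(s)) = q^{π₀}(x,φ(s)) (no within-neighbor reward shift under either policy), and the score function is constant within each neighborhood, then E_{s∼π₀(·|x)} [ w(φ(s),x) · g(φ(s)) · q(x,s) ] = E_{s∼π_θ(·|x)} [ g(φ(s)) · q^{π_θ}(x,φ(s)) ] where g(φ(s)) := ∇_θ log π_θ(φ(s)|x). In the special case where K(s,s') = 1{φ(s)=φ(s')} induces a partition of S into clusters, and q(x,·) is constant on each cluster, the DSO estimator is unbiased: E_{s∼π₀(·|x)} [ (π_θ(φ(s)|x)/π₀(φ(s)|x)) · g(φ(s)) · q(x,s) ] = Σ_{s} π_θ(s|x) · g(φ(s)) · q(x,s). -/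
open Finset

/-- unbiasedness of the DSO estimator when the kernel induces a
partition of S into clusters and the reward is constant on each cluster:
E_{s∼π₀}[(π_θ(φ(s))/π₀(φ(s)))·g(φ(s))·q(s)] = Σ_s π_θ(s)·g(φ(s))·q(s). -/
theorem stmt_6 {S C : Type*} [Fintype S] [Fintype C] [DecidableEq C]
    (φ : S → C) (πθ π₀ : S → ℝ) (q : S → ℝ) (g : C → ℝ)
    (hπθ_nonneg : ∀ s, 0 ≤ πθ s) (hπθ_sum : ∑ s, πθ s = 1)
    (hπ₀_nonneg : ∀ s, 0 ≤ π₀ s) (hπ₀_sum : ∑ s, π₀ s = 1)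
    (hq_const : ∀ s s', φ s = φ s' → q s = q s')
    (hsupport : ∀ c, 0 < ∑ s ∈ univ.filter (fun s => φ s = c), πθ s →
        0 < ∑ s ∈ univ.filter (fun s => φ s = c), π₀ s) :
    ∑ s, π₀ s * ((∑ s' ∈ univ.filter (fun s' => φ s' = φ s), πθ s')
        / (∑ s' ∈ univ.filter (fun s' => φ s' = φ s), π₀ s')
        * g (φ s) * q s)
      = ∑ s, πθ s * g (φ s) * q s := by
  classical
  rw [← Finset.sum_fiberwise univ φ
      (fun s => π₀ s * ((∑ s' ∈ univ.filter (fun s' => φ s' = φ s), πθ s')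
        / (∑ s' ∈ univ.filter (fun s' => φ s' = φ s), π₀ s') * g (φ s) * q s)),
    ← Finset.sum_fiberwise univ φ (fun s => πθ s * g (φ s) * q s)]
  refine Finset.sum_congr rfl fun c _ => ?_
  set Pθ := ∑ s ∈ univ.filter (fun s => φ s = c), πθ s with hPθ
  set P₀ := ∑ s ∈ univ.filter (fun s => φ s = c), π₀ s with hP₀
  have hfib : ∀ s ∈ univ.filter (fun s => φ s = c), φ s = c := by
    intro s hs; simpa using (Finset.mem_filter.mp hs).2
  rcases Finset.eq_empty_or_nonempty (univ.filter (fun s => φ s = c)) with he | ⟨s₀, hs₀⟩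
  · simp [he]
  have hq : ∀ s ∈ univ.filter (fun s => φ s = c), q s = q s₀ :=
    fun s hs => hq_const s s₀ (by rw [hfib s hs, hfib s₀ hs₀])
  have hL : ∑ s ∈ univ.filter (fun s => φ s = c),
      π₀ s * ((∑ s' ∈ univ.filter (fun s' => φ s' = φ s), πθ s')
        / (∑ s' ∈ univ.filter (fun s' => φ s' = φ s), π₀ s') * g (φ s) * q s)
      = P₀ * (Pθ / P₀ * g c * q s₀) := by
    rw [show P₀ * (Pθ / P₀ * g c * q s₀)
        = ∑ s ∈ univ.filter (fun s => φ s = c), π₀ s * (Pθ / P₀ * g c * q s₀) by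
      rw [← Finset.sum_mul]]
    refine Finset.sum_congr rfl fun s hs => ?_
    rw [hfib s hs, hq s hs]
  have hR : ∑ s ∈ univ.filter (fun s => φ s = c), πθ s * g (φ s) * q s
      = Pθ * (g c * q s₀) := by
    rw [show Pθ * (g c * q s₀)
        = ∑ s ∈ univ.filter (fun s => φ s = c), πθ s * (g c * q s₀) by
      rw [← Finset.sum_mul]]
    refine Finset.sum_congr rfl fun s hs => ?_
    rw [hfib s hs, hq s hs, mul_assoc]
  rw [hL, hR]
  by_cases h0 : P₀ = 0
  · have hθ0 : Pθ = 0 := by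
      by_contra hne
      have hpos : 0 < Pθ :=
        lt_of_le_of_ne (Finset.sum_nonneg fun s _ => hπθ_nonneg s) (Ne.symm hne)
      exact absurd (hsupport c hpos) (by simp [← hP₀, h0])
    simp [h0, hθ0]
  · field_simp
end

section
/- Bias of cluster-based importance sampling with within-cluster reward shift: with a partition φ of sentences into clusters, the bias of the DSO estimator equals the expectation over the target policy's cluster distribution of g(c) times the difference of within-cluster expected rewards: E_{s∼π₀}[ (π_θ(φ(s))/π₀(φ(s))) · g(φ(s)) · q(s) ] − E_{s∼π_θ}[ g(φ(s)) · q(s) ] = Σ_c π_θ(c) · g(c) · ( q^{π₀}(c) − q^{π_θ}(c) ), where q^{π}(c) := Σ_{s: φ(s)=c} (π(s)/π(c)) · q(s). -/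
open Finset

/-- bias of cluster-based importance sampling with within-cluster
reward shift equals Σ_c π_θ(c)·g(c)·(q^{π₀}(c) − q^{π_θ}(c)). -/
theorem stmt_7 {S C : Type*} [Fintype S] [Fintype C] [DecidableEq C]
    (φ : S → C) (πθ π₀ : S → ℝ) (q : S → ℝ) (g : C → ℝ)
    (hπθ_nonneg : ∀ s, 0 ≤ πθ s) (hπθ_sum : ∑ s, πθ s = 1)
    (hπ₀_nonneg : ∀ s, 0 ≤ π₀ s) (hπ₀_sum : ∑ s, π₀ s = 1)
    (hsupport : ∀ c, 0 < ∑ s ∈ univ.filter (fun s => φ s = c), πθ s →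
        0 < ∑ s ∈ univ.filter (fun s => φ s = c), π₀ s) :
    (∑ s, π₀ s * ((∑ s' ∈ univ.filter (fun s' => φ s' = φ s), πθ s')
          / (∑ s' ∈ univ.filter (fun s' => φ s' = φ s), π₀ s')
          * g (φ s) * q s))
      - (∑ s, πθ s * g (φ s) * q s)
      = ∑ c, (∑ s ∈ univ.filter (fun s => φ s = c), πθ s) * g c *
          ((∑ s ∈ univ.filter (fun s => φ s = c), π₀ s * q s)
              / (∑ s ∈ univ.filter (fun s => φ s = c), π₀ s)
            - (∑ s ∈ univ.filter (fun s => φ s = c), πθ s * q s)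
              / (∑ s ∈ univ.filter (fun s => φ s = c), πθ s)) := by
  have key : ∀ (f : S → ℝ), ∑ s, f s
      = ∑ c, ∑ s ∈ univ.filter (fun s => φ s = c), f s :=
    fun f => (Finset.sum_fiberwise Finset.univ φ f).symm
  rw [key (fun s => π₀ s * ((∑ s' ∈ univ.filter (fun s' => φ s' = φ s), πθ s')
          / (∑ s' ∈ univ.filter (fun s' => φ s' = φ s), π₀ s')
          * g (φ s) * q s)),
      key (fun s => πθ s * g (φ s) * q s), ← Finset.sum_sub_distrib]
  refine Finset.sum_congr rfl fun c _ => ?_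
  have h1 : ∑ s ∈ univ.filter (fun s => φ s = c),
      π₀ s * ((∑ s' ∈ univ.filter (fun s' => φ s' = φ s), πθ s')
        / (∑ s' ∈ univ.filter (fun s' => φ s' = φ s), π₀ s') * g (φ s) * q s)
      = ((∑ s' ∈ univ.filter (fun s' => φ s' = c), πθ s')
        / (∑ s' ∈ univ.filter (fun s' => φ s' = c), π₀ s')) * g c
        * ∑ s ∈ univ.filter (fun s => φ s = c), π₀ s * q s := by
    rw [Finset.mul_sum]
    refine Finset.sum_congr rfl fun s hs => ?_
    have : φ s = c := (Finset.mem_filter.mp hs).2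
    rw [this]; ring
  have h2 : ∑ s ∈ univ.filter (fun s => φ s = c), πθ s * g (φ s) * q s
      = g c * ∑ s ∈ univ.filter (fun s => φ s = c), πθ s * q s := by
    rw [Finset.mul_sum]
    refine Finset.sum_congr rfl fun s hs => ?_
    have : φ s = c := (Finset.mem_filter.mp hs).2
    rw [this]; ring
  rw [h1, h2]
  set Tθ := ∑ s ∈ univ.filter (fun s => φ s = c), πθ s with hTθ
  set T₀ := ∑ s ∈ univ.filter (fun s => φ s = c), π₀ s with hT₀
  set Qθ := ∑ s ∈ univ.filter (fun s => φ s = c), πθ s * q s with hQθ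
  set Q₀ := ∑ s ∈ univ.filter (fun s => φ s = c), π₀ s * q s with hQ₀
  have hTθnn : 0 ≤ Tθ := Finset.sum_nonneg fun s _ => hπθ_nonneg s
  rcases eq_or_lt_of_le hTθnn with h0 | hpos
  · have hQθ0 : Qθ = 0 := by
      apply Finset.sum_eq_zero
      intro s hs
      have : πθ s = 0 := by
        have := (Finset.sum_eq_zero_iff_of_nonneg (fun s _ => hπθ_nonneg s)).mp h0.symm s hs
        exact this
      simp [this]
    rw [← h0, hQθ0]
    simp
  · have hT₀pos : 0 < T₀ := hsupport c hpos
    field_simp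
end

section
/- Equivalence of the sentence-space and action-space policy gradients: under the setup of the previous statement, Σ_x p(x) Σ_a π_θ(a|x)·(d/dθ log π_θ(a|x))·q̄(x,a) = Σ_x p(x) Σ_s π_θ(s|x)·(d/dθ log π_θ(s|x))·q(x,s), where q̄(x,a) := Σ_s p_LLM(s|x,a)·q(x,s), π_θ(s|x) := Σ_a p_LLM(s|x,a)·π_θ(a|x), and it is assumed that π_θ(s|x) > 0 for all s with some a having p_LLM(s|x,a) > 0. -/
/-- equivalence of the action-space and sentence-space policy
gradients: Σ_x p(x) Σ_a π_θ(a|x)·(d/dθ log π_θ(a|x))·q̄(x,a)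
 = Σ_x p(x) Σ_s π_θ(s|x)·(d/dθ log π_θ(s|x))·q(x,s). -/
theorem stmt_15 {X A S : Type*} [Fintype X] [Fintype A] [Fintype S]
    (p : X → ℝ) (π : ℝ → X → A → ℝ) (pLLM : X → A → S → ℝ) (q : X → S → ℝ)
    (θ : ℝ)
    (hp_nonneg : ∀ x, 0 ≤ p x) (hp_sum : ∑ x, p x = 1)
    (hπ_pos : ∀ t x a, 0 < π t x a)
    (hπ_sum : ∀ t x, ∑ a, π t x a = 1)
    (hπ_diff : ∀ x a, Differentiable ℝ (fun t => π t x a))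
    (hpl_nonneg : ∀ x a s, 0 ≤ pLLM x a s)
    (hpl_sum : ∀ x a, ∑ s, pLLM x a s = 1)
    (hmarg_pos : ∀ t x s, (∃ a, 0 < pLLM x a s) →
        0 < ∑ a, pLLM x a s * π t x a) :
    ∑ x, p x * ∑ a, π θ x a * deriv (fun t => Real.log (π t x a)) θ
        * ∑ s, pLLM x a s * q x s
      = ∑ x, p x * ∑ s, (∑ a, pLLM x a s * π θ x a)
          * deriv (fun t => Real.log (∑ a, pLLM x a s * π t x a)) θ
          * q x s := by
  refine Finset.sum_congr rfl fun x _ => ?_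
  congr 1
  -- LHS inner sum
  have hL : ∀ a, π θ x a * deriv (fun t => Real.log (π t x a)) θ
      * ∑ s, pLLM x a s * q x s
      = deriv (fun t => π t x a) θ * ∑ s, pLLM x a s * q x s := by
    intro a
    have h := ((hπ_diff x a θ).hasDerivAt.log (ne_of_gt (hπ_pos θ x a))).deriv
    have hne := (hπ_pos θ x a).ne'
    rw [h]
    field_simp
  -- RHS inner sum
  have hR : ∀ s, (∑ a, pLLM x a s * π θ x a)
      * deriv (fun t => Real.log (∑ a, pLLM x a s * π t x a)) θ * q x s
      = (∑ a, pLLM x a s * deriv (fun t => π t x a) θ) * q x s := by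
    intro s
    by_cases hs : ∃ a, 0 < pLLM x a s
    · have hm := hmarg_pos θ x s hs
      have hdiff : HasDerivAt (fun t => ∑ a, pLLM x a s * π t x a)
          (∑ a, pLLM x a s * deriv (fun t => π t x a) θ) θ :=
        HasDerivAt.fun_sum fun a _ =>
          ((hπ_diff x a θ).hasDerivAt.const_mul (pLLM x a s))
      rw [(hdiff.log hm.ne').deriv]
      field_simp
    · have hz : ∀ a, pLLM x a s = 0 := by
        intro a
        by_contra h
        exact hs ⟨a, lt_of_le_of_ne (hpl_nonneg x a s) (Ne.symm h)⟩
      simp [hz]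
  rw [Finset.sum_congr rfl fun a _ => hL a, Finset.sum_congr rfl fun s _ => hR s]
  simp only [Finset.mul_sum, Finset.sum_mul]
  rw [Finset.sum_comm]
  exact Finset.sum_congr rfl fun s _ => Finset.sum_congr rfl fun a _ => by ring
end
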